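/- Let q > 1 and s > 1/2 be real numbers. For each m ∈ ℕ let g_m be a positive integer and α_{m,1},…,α_{m,2g_m} real numbers (angles), and suppose that for every positive integer r: (1/(2g_m))·∑_{j=1}^{2g_m} cos(r·α_{m,j}) → ((1−√q)/2)·q^{−r/2} as m → ∞. Then (1/g_m)·∑_{j=1}^{2g_m} log|1 − √q·e^{i α_{m,j}}·q^{−s}| → −(√q − 1)·log(1 − q^{−s}) as m → ∞. -/

import Mathlib

open Filter

/-- Taylor expansion of `log ‖1 - r·e^{iθ}‖` for `0 ≤ r < 1`. -/
lemma aux_log_hasSum (r θ : ℝ) (h0 : 0 ≤ r) (h1 : r < 1) :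
    HasSum (fun n : ℕ => -(r ^ n / (n : ℝ) * Real.cos ((n : ℝ) * θ)))
      (Real.log ‖1 - (r : ℂ) * Complex.exp ((θ : ℂ) * Complex.I)‖) := by
  set z : ℂ := (r : ℂ) * Complex.exp ((θ : ℂ) * Complex.I) with hz
  have hznorm : ‖z‖ < 1 := by
    rw [hz, norm_mul, Complex.norm_exp_ofReal_mul_I, mul_one, Complex.norm_real,
      Real.norm_eq_abs, abs_of_nonneg h0]
    exact h1
  have H := Complex.hasSum_taylorSeries_neg_log hznorm
  have H2 := (Complex.hasSum_re H).neg
  have hterm : ∀ n : ℕ, -(z ^ n / (n : ℂ)).re = -(r ^ n / (n : ℝ) * Real.cos ((n : ℝ) * θ)) := by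
    intro n
    have hzn : z ^ n / (n : ℂ) = ((r ^ n / (n : ℝ) : ℝ) : ℂ) *
        Complex.exp ((((n : ℝ) * θ : ℝ) : ℂ) * Complex.I) := by
      rw [hz, mul_pow, ← Complex.exp_nat_mul]
      push_cast
      ring_nf
    rw [hzn, Complex.re_ofReal_mul, Complex.exp_ofReal_mul_I_re]
  have hre : (-(-Complex.log (1 - z)).re) = Real.log ‖1 - z‖ := by
    rw [Complex.neg_re, neg_neg, Complex.log_re]
  rw [← hre]
  exact H2.congr_fun fun n => (hterm n).symm

/-- Drinfeld–Vlăduţ equidistribution implies the asymptotics of `(1/g)·log|L_C(s)|`: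
if for every positive integer `r` the Weyl sums
`(1/(2gₘ))·∑ⱼ cos(r·α_{m,j})` tend to `((1−√q)/2)·q^{−r/2}`, then for real `s > 1/2`
`(1/gₘ)·∑ⱼ log|1 − √q·e^{iα_{m,j}}·q^{−s}|` tends to `−(√q−1)·log(1−q^{−s})`. -/
theorem stmt_16 (q s : ℝ) (hq : 1 < q) (hs : 1 / 2 < s)
    (g : ℕ → ℕ) (hg : ∀ m, 0 < g m)
    (α : (m : ℕ) → Fin (2 * g m) → ℝ)
    (hweyl : ∀ r : ℕ, 0 < r →
      Tendsto (fun m : ℕ => (1 / (2 * (g m : ℝ))) * ∑ j, Real.cos (r * α m j))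
        atTop (nhds ((1 - Real.sqrt q) / 2 * q ^ (-(r : ℝ) / 2)))) :
    Tendsto (fun m : ℕ => (1 / (g m : ℝ)) *
        ∑ j, Real.log ‖1 - (Real.sqrt q : ℂ) * Complex.exp (Complex.I * (α m j : ℂ)) *
          ((q ^ (-s) : ℝ) : ℂ)‖)
      atTop (nhds (-(Real.sqrt q - 1) * Real.log (1 - q ^ (-s)))) := by
  have hq0 : (0 : ℝ) < q := lt_trans one_pos hq
  set x : ℝ := q ^ (-s) with hxdef
  have hx0 : 0 < x := Real.rpow_pos_of_pos hq0 _
  have hx1 : x < 1 := Real.rpow_lt_one_of_one_lt_of_neg hq (by linarith)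
  set ρ : ℝ := Real.sqrt q * x with hρdef
  have hsq0 : 0 < Real.sqrt q := Real.sqrt_pos.mpr hq0
  have hρ0 : 0 < ρ := mul_pos hsq0 hx0
  have hρ1 : ρ < 1 := by
    have hρeq : ρ = q ^ ((1 : ℝ) / 2 - s) := by
      rw [hρdef, hxdef, Real.sqrt_eq_rpow, ← Real.rpow_add hq0]
      congr 1
    rw [hρeq]
    exact Real.rpow_lt_one_of_one_lt_of_neg hq (by linarith)
  have hgm : ∀ m, (g m : ℝ) ≠ 0 := fun m => Nat.cast_ne_zero.mpr (hg m).ne'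
  -- key power relation: ρ^k · q^(-k/2) = x^k
  have hkey : ∀ k : ℕ, ρ ^ k * q ^ (-(k : ℝ) / 2) = x ^ k := by
    intro k
    have h1 : Real.sqrt q ^ k * q ^ (-(k : ℝ) / 2) = 1 := by
      rw [← Real.rpow_natCast (Real.sqrt q) k, Real.sqrt_eq_rpow,
        ← Real.rpow_mul hq0.le, ← Real.rpow_add hq0,
        show (1 : ℝ) / 2 * (k : ℝ) + -(k : ℝ) / 2 = 0 by ring, Real.rpow_zero]
    calc ρ ^ k * q ^ (-(k : ℝ) / 2)
        = x ^ k * (Real.sqrt q ^ k * q ^ (-(k : ℝ) / 2)) := by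
          rw [hρdef, mul_pow]; ring
      _ = x ^ k := by rw [h1, mul_one]
  -- the double-sequence and its termwise limit
  set F : ℕ → ℕ → ℝ := fun m n =>
    (1 / (g m : ℝ)) * ∑ j, -(ρ ^ n / (n : ℝ) * Real.cos ((n : ℝ) * α m j)) with hF
  set f : ℕ → ℝ := fun n =>
    -(ρ ^ n / (n : ℝ)) * ((1 - Real.sqrt q) * q ^ (-(n : ℝ) / 2)) with hf
  -- per-m expansion
  have key : ∀ m, HasSum (F m) ((1 / (g m : ℝ)) *
      ∑ j, Real.log ‖1 - (Real.sqrt q : ℂ) * Complex.exp (Complex.I * (α m j : ℂ)) *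
        ((x : ℝ) : ℂ)‖) := by
    intro m
    have hzeq : ∀ θ : ℝ, (1 : ℂ) - (Real.sqrt q : ℂ) * Complex.exp (Complex.I * (θ : ℂ)) *
        ((x : ℝ) : ℂ) = 1 - (ρ : ℂ) * Complex.exp ((θ : ℂ) * Complex.I) := by
      intro θ
      rw [mul_comm Complex.I, hρdef]
      push_cast
      ring
    have h1 : HasSum (fun n : ℕ => ∑ j, -(ρ ^ n / (n : ℝ) * Real.cos ((n : ℝ) * α m j)))
        (∑ j, Real.log ‖1 - (Real.sqrt q : ℂ) * Complex.exp (Complex.I * (α m j : ℂ)) *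
          ((x : ℝ) : ℂ)‖) := by
      refine hasSum_sum fun j _ => ?_
      rw [show (1 : ℂ) - (Real.sqrt q : ℂ) * Complex.exp (Complex.I * (α m j : ℂ)) *
        ((x : ℝ) : ℂ) = 1 - (ρ : ℂ) * Complex.exp ((α m j : ℂ) * Complex.I) from hzeq _]
      exact aux_log_hasSum ρ (α m j) hρ0.le hρ1
    exact h1.mul_left _
  -- termwise limits
  have hlim : ∀ n : ℕ, Tendsto (fun m => F m n) atTop (nhds (f n)) := by
    intro n
    rcases Nat.eq_zero_or_pos n with rfl | hn
    · simp only [hF, hf, Nat.cast_zero, div_zero, zero_mul, neg_zero, mul_zero,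
        Finset.sum_const_zero]
      exact tendsto_const_nhds
    · have h := (hweyl n hn).const_mul (-(ρ ^ n / (n : ℝ)) * 2)
      have heq : (-(ρ ^ n / (n : ℝ)) * 2) * ((1 - Real.sqrt q) / 2 * q ^ (-(n : ℝ) / 2))
          = f n := by rw [hf]; ring
      rw [heq] at h
      refine h.congr fun m => ?_
      have hsum : ∑ j, -(ρ ^ n / (n : ℝ) * Real.cos ((n : ℝ) * α m j))
          = (-(ρ ^ n / (n : ℝ))) * ∑ j, Real.cos ((n : ℝ) * α m j) := by
        rw [Finset.mul_sum]
        exact Finset.sum_congr rfl fun j _ => by ring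
      simp only [hF]
      rw [hsum]
      field_simp
  -- uniform bound
  have hbound : ∀ m n, ‖F m n‖ ≤ 2 * ρ ^ n := by
    intro m n
    have hterm : ∀ j, |(-(ρ ^ n / (n : ℝ) * Real.cos ((n : ℝ) * α m j)))| ≤ ρ ^ n := by
      intro j
      rw [abs_neg, abs_mul]
      rcases Nat.eq_zero_or_pos n with rfl | hn
      · simp
      · have h1 : |ρ ^ n / (n : ℝ)| ≤ ρ ^ n := by
          rw [abs_of_nonneg (div_nonneg (pow_nonneg hρ0.le _) (Nat.cast_nonneg _))]
          exact div_le_self (pow_nonneg hρ0.le _) (by exact_mod_cast hn)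
        calc |ρ ^ n / (n : ℝ)| * |Real.cos ((n : ℝ) * α m j)|
            ≤ ρ ^ n * 1 := mul_le_mul h1 (Real.abs_cos_le_one _) (abs_nonneg _)
              (pow_nonneg hρ0.le _)
          _ = ρ ^ n := mul_one _
    have hS : |∑ j, -(ρ ^ n / (n : ℝ) * Real.cos ((n : ℝ) * α m j))|
        ≤ (2 * g m : ℝ) * ρ ^ n := by
      calc |∑ j, -(ρ ^ n / (n : ℝ) * Real.cos ((n : ℝ) * α m j))|
          ≤ ∑ j, |(-(ρ ^ n / (n : ℝ) * Real.cos ((n : ℝ) * α m j)))| :=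
            Finset.abs_sum_le_sum_abs _ _
        _ ≤ ∑ _j : Fin (2 * g m), ρ ^ n := Finset.sum_le_sum fun j _ => hterm j
        _ = (2 * g m : ℝ) * ρ ^ n := by
            rw [Finset.sum_const, Finset.card_univ, Fintype.card_fin, nsmul_eq_mul]
            push_cast
            ring
    rw [hF]
    simp only [Real.norm_eq_abs, abs_mul]
    calc |1 / (g m : ℝ)| * |∑ j, -(ρ ^ n / (n : ℝ) * Real.cos ((n : ℝ) * α m j))|
        ≤ (1 / (g m : ℝ)) * ((2 * g m : ℝ) * ρ ^ n) := by
          rw [abs_of_nonneg (by positivity : (0:ℝ) ≤ 1 / (g m : ℝ))]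
          exact mul_le_mul_of_nonneg_left hS (by positivity)
      _ = 2 * ρ ^ n := by field_simp [hgm m]
  have hsummable : Summable (fun n : ℕ => 2 * ρ ^ n) :=
    (summable_geometric_of_lt_one hρ0.le hρ1).mul_left 2
  -- dominated convergence
  have hmain : Tendsto (fun m => ∑' n, F m n) atTop (nhds (∑' n, f n)) :=
    tendsto_tsum_of_dominated_convergence hsummable hlim
      (Eventually.of_forall fun m => hbound m)
  -- identify the tsum of f
  have hfsum : HasSum f (-(Real.sqrt q - 1) * Real.log (1 - x)) := by
    have H0 := Real.hasSum_pow_div_log_of_abs_lt_one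
      (x := x) (by rw [abs_of_pos hx0]; exact hx1)
    have H1 := H0.mul_left (Real.sqrt q - 1)
    have hshift : ∀ n : ℕ, f (n + 1) = (Real.sqrt q - 1) * (x ^ (n + 1) / ((n : ℝ) + 1)) := by
      intro n
      have := hkey (n + 1)
      rw [hf]
      push_cast
      push_cast at this
      linear_combination ((Real.sqrt q - 1) / ((n : ℝ) + 1)) * this
    have H2 : HasSum (fun n : ℕ => f (n + 1))
        ((Real.sqrt q - 1) * -Real.log (1 - x)) := H1.congr_fun hshift
    have H3 := (hasSum_nat_add_iff (f := f) 1).mp H2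
    have hf0 : ∑ i ∈ Finset.range 1, f i = 0 := by
      simp [hf]
    rw [hf0, add_zero] at H3
    convert H3 using 1
    · rfl
    · ring
  have htsum : ∑' n, f n = -(Real.sqrt q - 1) * Real.log (1 - x) := hfsum.tsum_eq
  rw [htsum] at hmain
  refine hmain.congr fun m => ?_
  exact (key m).tsum_eq
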